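/- arXiv:1707.07334 — 3 statements merged into one kernel-verified Lean document; each statement's English description precedes it below -/
import Mathlib

section
/- Let n, k, x be natural numbers with x ≤ k, and let δ be a real number satisfying 0 < δ ≤ 1/2, (1+δ)^k ≤ 2, and k + 1 ≤ δ·n. Let a, b be natural numbers with a ≤ n, b ≤ n, and |a − b| ≤ δ·n. Then |C(a, x) − C(b, x)| ≤ 4·δ·n^x, where C(·,·) denotes the binomial coefficient with the convention C(L, M) = 0 whenever L < M. -/
lemma choose_sub_le (n y : ℕ) : ∀ d b : ℕ, b + d ≤ n →
    (b + d).choose (y + 1) ≤ b.choose (y + 1) + d * n ^ y := by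
  intro d
  induction d with
  | zero => intro b _; simp
  | succ d ih =>
    intro b hbn
    have h1 : (b + (d + 1)).choose (y + 1) = (b + d).choose y + (b + d).choose (y + 1) := by
      have : b + (d + 1) = (b + d) + 1 := by ring
      rw [this, Nat.choose_succ_succ]
    rw [h1]
    have h2 : (b + d).choose y ≤ n ^ y :=
      le_trans (Nat.choose_le_choose y (by omega)) (Nat.choose_le_pow n y)
    have h3 := ih b (by omega)
    calc (b + d).choose y + (b + d).choose (y + 1)
        ≤ n ^ y + (b.choose (y + 1) + d * n ^ y) := by omega
      _ = b.choose (y + 1) + (d + 1) * n ^ y := by ring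

lemma key_bound (n x : ℕ) (δ : ℝ) (hδ0 : 0 < δ)
    (a b : ℕ) (ha : a ≤ n) (hba : b ≤ a) (hab : |(a : ℝ) - (b : ℝ)| ≤ δ * n) :
    |(a.choose x : ℝ) - (b.choose x : ℝ)| ≤ 4 * δ * (n : ℝ) ^ x := by
  cases x with
  | zero =>
    simp only [Nat.choose_zero_right, pow_zero]
    norm_num
    linarith
  | succ y =>
    have hmono : b.choose (y + 1) ≤ a.choose (y + 1) := Nat.choose_le_choose _ hba
    have habs : |(a.choose (y+1) : ℝ) - (b.choose (y+1) : ℝ)|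
        = ((a.choose (y+1) - b.choose (y+1) : ℕ) : ℝ) := by
      rw [abs_of_nonneg (sub_nonneg.mpr ((Nat.cast_le (α := ℝ)).mpr hmono)), Nat.cast_sub hmono]
    rw [habs]
    have hkey : a.choose (y + 1) - b.choose (y + 1) ≤ (a - b) * n ^ y := by
      have := choose_sub_le n y (a - b) b (by omega)
      rw [show b + (a - b) = a by omega] at this
      omega
    have h1 : ((a.choose (y+1) - b.choose (y+1) : ℕ) : ℝ) ≤ ((a - b : ℕ) : ℝ) * (n : ℝ) ^ y := by
      exact_mod_cast Nat.cast_le.mpr hkey |>.trans_eq (by push_cast; ring)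
    have h2 : ((a - b : ℕ) : ℝ) ≤ δ * n := by
      rw [Nat.cast_sub hba]
      rwa [abs_of_nonneg (by exact sub_nonneg.mpr (Nat.cast_le.mpr hba))] at hab
    have hny : (0:ℝ) ≤ (n:ℝ) ^ y := by positivity
    calc ((a.choose (y+1) - b.choose (y+1) : ℕ) : ℝ)
        ≤ (δ * n) * (n : ℝ) ^ y := le_trans h1 (mul_le_mul_of_nonneg_right h2 hny)
      _ = δ * (n : ℝ) ^ (y + 1) := by ring
      _ ≤ 4 * δ * (n : ℝ) ^ (y + 1) := by nlinarith [pow_nonneg (Nat.cast_nonneg n : (0:ℝ) ≤ n) (y+1)]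

/-- (Binomial coefficient perturbation bound.) Let `x ≤ k`,
`0 < δ ≤ 1/2`, `(1+δ)^k ≤ 2`, `k + 1 ≤ δ·n`, and let `a, b ≤ n` be natural numbers with
`|a − b| ≤ δ·n`. Then `|C(a,x) − C(b,x)| ≤ 4·δ·n^x`, where `C(L,M) = 0` for `L < M`. -/
theorem choose_perturbation_bound (n k x : ℕ) (hxk : x ≤ k)
    (δ : ℝ) (hδ0 : 0 < δ) (hδ : δ ≤ 1 / 2) (hδk : (1 + δ) ^ k ≤ 2)
    (hkn : (k : ℝ) + 1 ≤ δ * n)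
    (a b : ℕ) (ha : a ≤ n) (hb : b ≤ n) (hab : |(a : ℝ) - (b : ℝ)| ≤ δ * n) :
    |(a.choose x : ℝ) - (b.choose x : ℝ)| ≤ 4 * δ * (n : ℝ) ^ x := by
  rcases le_total b a with h | h
  · exact key_bound n x δ hδ0 a b ha h hab
  · rw [abs_sub_comm] at hab ⊢
    exact key_bound n x δ hδ0 b a hb h hab
end

section
/- Let k ≥ 1 and n ≥ 1 be natural numbers, I a nonempty finite set with |I| ≤ k, and x : I → ℕ with ∑_{i ∈ I} x_i = k. Let δ be a real number with 0 < 4δ ≤ 1, and let y : I → ℝ satisfy 0 ≤ y_i ≤ n^{x_i} for every i ∈ I. Then ∏_{i ∈ I}(y_i + 4δ·n^{x_i}) < ∏_{i ∈ I} y_i + 4δ·2^k·n^k, and ∏_{i ∈ I}(y_i − 4δ·n^{x_i}) > ∏_{i ∈ I} y_i − 4δ·2^k·n^k. -/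
lemma prod_pert_up {ι : Type*} (ε : ℝ) (hε0 : 0 ≤ ε) (hε1 : ε ≤ 1)
    (y N : ι → ℝ) (I : Finset ι) (h0 : ∀ i ∈ I, 0 ≤ y i) (h1 : ∀ i ∈ I, y i ≤ N i) :
    ∏ i ∈ I, (y i + ε * N i) ≤ (∏ i ∈ I, y i) + ε * (2 ^ I.card - 1) * ∏ i ∈ I, N i := by
  classical
  induction I using Finset.induction_on with
  | empty => simp
  | @insert a s ha ih =>
    have h0a : 0 ≤ y a := h0 a (by simp)
    have h1a : y a ≤ N a := h1 a (by simp)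
    have hNa : 0 ≤ N a := h0a.trans h1a
    have h0s : ∀ i ∈ s, 0 ≤ y i := fun i hi => h0 i (by simp [hi])
    have h1s : ∀ i ∈ s, y i ≤ N i := fun i hi => h1 i (by simp [hi])
    have ih' := ih h0s h1s
    have hP0 : 0 ≤ ∏ i ∈ s, y i := Finset.prod_nonneg h0s
    have hPQ : ∏ i ∈ s, y i ≤ ∏ i ∈ s, N i := Finset.prod_le_prod h0s h1s
    have hL0 : 0 ≤ ∏ i ∈ s, (y i + ε * N i) :=
      Finset.prod_nonneg fun i hi => by nlinarith [h0s i hi, (h0s i hi).trans (h1s i hi)]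
    rw [Finset.prod_insert ha, Finset.prod_insert ha, Finset.prod_insert ha,
      Finset.card_insert_of_notMem ha, pow_succ]
    set P := ∏ i ∈ s, y i
    set Q := ∏ i ∈ s, N i
    set L := ∏ i ∈ s, (y i + ε * N i)
    have hQ0 : 0 ≤ Q := hP0.trans hPQ
    have key : (y a + ε * N a) * L ≤ (y a + ε * N a) * (P + ε * (2 ^ s.card - 1) * Q) :=
      mul_le_mul_of_nonneg_left ih' (by nlinarith)
    have h2m : (1:ℝ) ≤ 2 ^ s.card := by exact_mod_cast Nat.one_le_two_pow
    have h2m' : (0:ℝ) ≤ 2 ^ s.card - 1 := by linarith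
    have hb1 : y a * (ε * (2 ^ s.card - 1) * Q) ≤ N a * (ε * (2 ^ s.card - 1) * Q) :=
      mul_le_mul_of_nonneg_right h1a (mul_nonneg (mul_nonneg hε0 h2m') hQ0)
    have hb2 : ε * N a * P ≤ ε * N a * Q :=
      mul_le_mul_of_nonneg_left hPQ (mul_nonneg hε0 hNa)
    have hb3 : ε * (ε * N a * ((2 ^ s.card - 1) * Q)) ≤ 1 * (ε * N a * ((2 ^ s.card - 1) * Q)) :=
      mul_le_mul_of_nonneg_right hε1 (mul_nonneg (mul_nonneg hε0 hNa) (mul_nonneg h2m' hQ0))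
    nlinarith [hb1, hb2, hb3]

lemma prod_pert_down {ι : Type*} (ε : ℝ) (hε0 : 0 ≤ ε) (hε1 : ε ≤ 1)
    (y N : ι → ℝ) (I : Finset ι) (h0 : ∀ i ∈ I, 0 ≤ y i) (h1 : ∀ i ∈ I, y i ≤ N i) :
    (∏ i ∈ I, y i) - ε * (2 ^ I.card - 1) * ∏ i ∈ I, N i ≤ ∏ i ∈ I, (y i - ε * N i) := by
  classical
  induction I using Finset.induction_on with
  | empty => simp
  | @insert a s ha ih =>
    have h0a : 0 ≤ y a := h0 a (by simp)
    have h1a : y a ≤ N a := h1 a (by simp)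
    have hNa : 0 ≤ N a := h0a.trans h1a
    have h0s : ∀ i ∈ s, 0 ≤ y i := fun i hi => h0 i (by simp [hi])
    have h1s : ∀ i ∈ s, y i ≤ N i := fun i hi => h1 i (by simp [hi])
    have ih' := ih h0s h1s
    have hP0 : 0 ≤ ∏ i ∈ s, y i := Finset.prod_nonneg h0s
    have hPQ : ∏ i ∈ s, y i ≤ ∏ i ∈ s, N i := Finset.prod_le_prod h0s h1s
    have habs : |∏ i ∈ s, (y i - ε * N i)| ≤ ∏ i ∈ s, N i := by
      rw [Finset.abs_prod]
      refine Finset.prod_le_prod (fun i hi => abs_nonneg _) (fun i hi => ?_)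
      rw [abs_le]
      constructor <;> nlinarith [h0s i hi, h1s i hi, (h0s i hi).trans (h1s i hi)]
    rw [Finset.prod_insert ha, Finset.prod_insert ha, Finset.prod_insert ha,
      Finset.card_insert_of_notMem ha, pow_succ]
    set P := ∏ i ∈ s, y i
    set Q := ∏ i ∈ s, N i
    set L := ∏ i ∈ s, (y i - ε * N i)
    have hQ0 : 0 ≤ Q := hP0.trans hPQ
    have hLQ : L ≤ Q := (le_abs_self L).trans habs
    have hLQ' : -Q ≤ L := (neg_le_of_abs_le habs)
    have h2m : (1:ℝ) ≤ 2 ^ s.card := by exact_mod_cast Nat.one_le_two_pow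
    have key : y a * (P - ε * (2 ^ s.card - 1) * Q) ≤ y a * L :=
      mul_le_mul_of_nonneg_left ih' h0a
    nlinarith [mul_le_mul_of_nonneg_right h1a hQ0,
      mul_le_mul_of_nonneg_left hLQ (mul_nonneg hε0 hNa),
      mul_nonneg (mul_nonneg hε0 hNa) hQ0,
      mul_le_mul_of_nonneg_right h1a (mul_nonneg (mul_nonneg hε0 (by linarith : (0:ℝ) ≤ 2 ^ s.card - 1)) hQ0)]

/-- (Product perturbation bound.) Let `k, n ≥ 1`, `I` a nonempty finite
set with `|I| ≤ k`, `x : I → ℕ` with `∑_{i ∈ I} x i = k`, `0 < 4δ ≤ 1`, and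
`0 ≤ y i ≤ n^(x i)` for every `i ∈ I`. Then
`∏_{i∈I} (y i + 4δ·n^(x i)) < ∏_{i∈I} y i + 4δ·2^k·n^k` and
`∏_{i∈I} (y i − 4δ·n^(x i)) > ∏_{i∈I} y i − 4δ·2^k·n^k`. -/
theorem product_perturbation_bound {ι : Type*} (I : Finset ι) (hI : I.Nonempty)
    (n k : ℕ) (hn : 1 ≤ n) (hk : 1 ≤ k) (hIk : I.card ≤ k)
    (x : ι → ℕ) (hx : ∑ i ∈ I, x i = k)
    (δ : ℝ) (hδ0 : 0 < δ) (hδ : 4 * δ ≤ 1)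
    (y : ι → ℝ) (hy0 : ∀ i ∈ I, 0 ≤ y i) (hyn : ∀ i ∈ I, y i ≤ (n : ℝ) ^ (x i)) :
    (∏ i ∈ I, (y i + 4 * δ * (n : ℝ) ^ (x i))
        < (∏ i ∈ I, y i) + 4 * δ * 2 ^ k * (n : ℝ) ^ k) ∧
      (∏ i ∈ I, (y i - 4 * δ * (n : ℝ) ^ (x i))
        > (∏ i ∈ I, y i) - 4 * δ * 2 ^ k * (n : ℝ) ^ k) := by
  have hε0 : (0:ℝ) ≤ 4 * δ := by linarith
  have hprodN : ∏ i ∈ I, (n : ℝ) ^ (x i) = (n : ℝ) ^ k := by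
    rw [← hx, ← Finset.prod_pow_eq_pow_sum]
  have hup := prod_pert_up (4*δ) hε0 hδ y (fun i => (n:ℝ) ^ (x i)) I hy0 hyn
  have hdown := prod_pert_down (4*δ) hε0 hδ y (fun i => (n:ℝ) ^ (x i)) I hy0 hyn
  rw [hprodN] at hup hdown
  have hnk : (0:ℝ) < (n : ℝ) ^ k := pow_pos (by exact_mod_cast hn) k
  have hcard : (2:ℝ) ^ I.card ≤ 2 ^ k := pow_le_pow_right₀ (by norm_num) hIk
  have hstrict : 4 * δ * (2 ^ I.card - 1) * (n:ℝ) ^ k < 4 * δ * 2 ^ k * (n:ℝ) ^ k := by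
    apply mul_lt_mul_of_pos_right _ hnk
    have : (0:ℝ) < 4 * δ := by linarith
    nlinarith
  constructor
  · calc ∏ i ∈ I, (y i + 4 * δ * (n : ℝ) ^ (x i)) ≤ _ := hup
      _ < _ := by linarith
  · calc (∏ i ∈ I, y i) - 4 * δ * 2 ^ k * (n : ℝ) ^ k
        < (∏ i ∈ I, y i) - 4 * δ * (2 ^ I.card - 1) * (n:ℝ) ^ k := by linarith
      _ ≤ _ := hdown
end

section
/- Let n, k be natural numbers with 1 ≤ k ≤ n, I a nonempty finite set with |I| ≤ k, and x : I → ℕ with x_i ≥ 1 for all i and ∑_{i ∈ I} x_i = k. Let δ be a real number satisfying 0 < δ ≤ 1/4, (1+δ)^k ≤ 2, and k + 1 ≤ δ·n. Let a_i, b_i be natural numbers with a_i ≤ n, b_i ≤ n, and |a_i − b_i| ≤ δ·n for every i ∈ I. Then |∏_{i ∈ I} C(a_i, x_i)/C(n, k) − ∏_{i ∈ I} C(b_i, x_i)/C(n, k)| ≤ 4·δ·(2k)^k, where C(·,·) denotes the binomial coefficient with the convention C(L, M) = 0 whenever L < M. -/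
open Finset

/-- Lipschitz-type bound for binomial coefficients. -/
lemma choose_lip (n x b : ℕ) (hx : 1 ≤ x) :
    ∀ a, b ≤ a → a ≤ n → a.choose x ≤ b.choose x + (a - b) * n ^ (x - 1) := by
  intro a hba
  induction a, hba using Nat.le_induction with
  | base => simp
  | succ a hba ih =>
    intro han
    obtain ⟨y, rfl⟩ : ∃ y, x = y + 1 := ⟨x - 1, (Nat.succ_pred_eq_of_pos hx).symm⟩
    have h1 : a ≤ n := le_trans (Nat.le_succ a) han
    have h2 : a.choose y ≤ n ^ y :=
      le_trans (Nat.choose_le_choose y h1) (Nat.choose_le_pow n y)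
    have h3 := ih h1
    rw [Nat.choose_succ_succ]
    have : a + 1 - b = (a - b) + 1 := by omega
    rw [this]
    simp only [Nat.add_one_sub_one] at h3 ⊢
    calc a.choose y + a.choose (y + 1)
        ≤ n ^ y + (b.choose (y + 1) + (a - b) * n ^ y) := Nat.add_le_add h2 h3
      _ = b.choose (y + 1) + (a - b + 1) * n ^ y := by ring

/-- Lower bound for binomial coefficients: `n^k ≤ k^k * C(n,k)`. -/
lemma pow_le_pow_mul_choose (n k : ℕ) (hkn : k ≤ n) :
    n ^ k ≤ k ^ k * n.choose k := by
  have key : (∏ i ∈ range k, ((k - i) * n)) ≤ ∏ i ∈ range k, (k * (n - i)) := by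
    apply Finset.prod_le_prod'
    intro i hi
    rw [Finset.mem_range] at hi
    have h1 : k * i ≤ i * n := by rw [Nat.mul_comm]; exact Nat.mul_le_mul_left i hkn
    have e1 : (k - i) * n = k * n - i * n := Nat.sub_mul k i n
    have e2 : k * (n - i) = k * n - k * i := Nat.mul_sub k n i
    omega
  have lhs : (∏ i ∈ range k, ((k - i) * n)) = (Nat.factorial k) * n ^ k := by
    rw [Finset.prod_mul_distrib, Finset.prod_const, Finset.card_range]
    congr 1
    rw [← Finset.prod_range_add_one_eq_factorial, ← Finset.prod_range_reflect]
    apply Finset.prod_congr rfl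
    intro i hi
    rw [Finset.mem_range] at hi
    omega
  have rhs : (∏ i ∈ range k, (k * (n - i))) = k ^ k * ((Nat.factorial k) * n.choose k) := by
    rw [Finset.prod_mul_distrib, Finset.prod_const, Finset.card_range,
      ← Nat.descFactorial_eq_prod_range, Nat.descFactorial_eq_factorial_mul_choose]
  rw [lhs, rhs] at key
  have hfac : 0 < Nat.factorial k := Nat.factorial_pos k
  calc n ^ k = (Nat.factorial k) * n ^ k / (Nat.factorial k) := by rw [Nat.mul_div_cancel_left _ hfac]
    _ ≤ k ^ k * ((Nat.factorial k) * n.choose k) / (Nat.factorial k) := Nat.div_le_div_right key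
    _ = (Nat.factorial k) * (k ^ k * n.choose k) / (Nat.factorial k) := by ring_nf
    _ = k ^ k * n.choose k := by rw [Nat.mul_div_cancel_left _ hfac]

/-- Difference of products bound. -/
lemma abs_prod_sub_prod_le {ι : Type*} (s : Finset ι) (f g C : ι → ℝ)
    (hf : ∀ i ∈ s, 0 ≤ f i ∧ f i ≤ C i) (hg : ∀ i ∈ s, 0 ≤ g i ∧ g i ≤ C i)
    (hC : ∀ i ∈ s, 0 < C i) :
    |∏ i ∈ s, f i - ∏ i ∈ s, g i| ≤ (∑ i ∈ s, |f i - g i| / C i) * ∏ i ∈ s, C i := by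
  classical
  induction s using Finset.induction_on with
  | empty => simp
  | insert a t ha ih =>
    have hmem : ∀ i ∈ t, i ∈ insert a t := fun i hi => Finset.mem_insert_of_mem hi
    have hfa := hf a (Finset.mem_insert_self a t)
    have hga := hg a (Finset.mem_insert_self a t)
    have hCa := hC a (Finset.mem_insert_self a t)
    have ih' := ih (fun i hi => hf i (hmem i hi)) (fun i hi => hg i (hmem i hi))
      (fun i hi => hC i (hmem i hi))
    rw [Finset.prod_insert ha, Finset.prod_insert ha, Finset.sum_insert ha,
      Finset.prod_insert ha]
    have hft : 0 ≤ ∏ i ∈ t, f i := Finset.prod_nonneg fun i hi => (hf i (hmem i hi)).1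
    have hgt : 0 ≤ ∏ i ∈ t, g i := Finset.prod_nonneg fun i hi => (hg i (hmem i hi)).1
    have hfC : ∏ i ∈ t, f i ≤ ∏ i ∈ t, C i :=
      Finset.prod_le_prod (fun i hi => (hf i (hmem i hi)).1)
        (fun i hi => (hf i (hmem i hi)).2)
    have hCt : 0 ≤ ∏ i ∈ t, C i := Finset.prod_nonneg fun i hi => (hC i (hmem i hi)).le
    have key : f a * ∏ i ∈ t, f i - g a * ∏ i ∈ t, g i
        = (f a - g a) * ∏ i ∈ t, f i + g a * (∏ i ∈ t, f i - ∏ i ∈ t, g i) := by ring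
    rw [key]
    calc |(f a - g a) * ∏ i ∈ t, f i + g a * (∏ i ∈ t, f i - ∏ i ∈ t, g i)|
        ≤ |(f a - g a) * ∏ i ∈ t, f i| + |g a * (∏ i ∈ t, f i - ∏ i ∈ t, g i)| :=
          abs_add_le _ _
      _ = |f a - g a| * ∏ i ∈ t, f i + g a * |∏ i ∈ t, f i - ∏ i ∈ t, g i| := by
          rw [abs_mul, abs_mul, abs_of_nonneg hft, abs_of_nonneg hga.1]
      _ ≤ |f a - g a| * ∏ i ∈ t, C i
            + C a * ((∑ i ∈ t, |f i - g i| / C i) * ∏ i ∈ t, C i) :=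
          add_le_add (mul_le_mul_of_nonneg_left hfC (abs_nonneg _))
            (mul_le_mul hga.2 ih' (abs_nonneg _) hCa.le)
      _ = (|f a - g a| / C a + ∑ i ∈ t, |f i - g i| / C i) * (C a * ∏ i ∈ t, C i) := by
          field_simp

/-- (Approximation bound for empirical frequencies.) Let `1 ≤ k ≤ n`,
`I` a nonempty finite set with `|I| ≤ k`, `x : I → ℕ` with `x i ≥ 1` and `∑_{i∈I} x i = k`,
and let `δ` satisfy `0 < δ ≤ 1/4`, `(1+δ)^k ≤ 2`, `k + 1 ≤ δ·n`. If `a i, b i ≤ n` are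
natural numbers with `|a i − b i| ≤ δ·n` for every `i ∈ I`, then
`|∏_{i∈I} C(a i, x i)/C(n,k) − ∏_{i∈I} C(b i, x i)/C(n,k)| ≤ 4·δ·(2k)^k`,
where `C(L,M) = 0` for `L < M`. -/
theorem empirical_frequency_approx_bound {ι : Type*} (I : Finset ι) (hI : I.Nonempty)
    (n k : ℕ) (hk1 : 1 ≤ k) (hkn : k ≤ n) (hIk : I.card ≤ k)
    (x : ι → ℕ) (hx1 : ∀ i ∈ I, 1 ≤ x i) (hxsum : ∑ i ∈ I, x i = k)
    (δ : ℝ) (hδ0 : 0 < δ) (hδ4 : δ ≤ 1 / 4) (hδk : (1 + δ) ^ k ≤ 2)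
    (hδn : (k : ℝ) + 1 ≤ δ * n)
    (a b : ι → ℕ) (ha : ∀ i ∈ I, a i ≤ n) (hb : ∀ i ∈ I, b i ≤ n)
    (hab : ∀ i ∈ I, |(a i : ℝ) - (b i : ℝ)| ≤ δ * n) :
    |(∏ i ∈ I, ((a i).choose (x i) : ℝ)) / (n.choose k : ℝ)
        - (∏ i ∈ I, ((b i).choose (x i) : ℝ)) / (n.choose k : ℝ)|
      ≤ 4 * δ * (2 * k : ℝ) ^ k := by
  have hn1 : 1 ≤ n := le_trans hk1 hkn
  have hn0 : (0:ℝ) < n := by exact_mod_cast hn1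
  have hchoose_pos : (0:ℝ) < n.choose k := by
    exact_mod_cast Nat.choose_pos hkn
  -- step 1: per-index Lipschitz bound in ℝ
  have lip : ∀ i ∈ I, |((a i).choose (x i) : ℝ) - ((b i).choose (x i) : ℝ)|
      ≤ δ * (n:ℝ) ^ (x i) := by
    intro i hi
    have hxi := hx1 i hi
    have key : ∀ p q : ℕ, q ≤ p → p ≤ n → |(p:ℝ) - q| ≤ δ * n →
        |((p).choose (x i) : ℝ) - ((q).choose (x i) : ℝ)| ≤ δ * (n:ℝ) ^ (x i) := by
      intro p q hqp hpn habs
      have h1 := choose_lip n (x i) q hxi p hqp hpn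
      have h2 : ((p - q : ℕ) : ℝ) ≤ δ * n := by
        have hc : ((q : ℝ)) ≤ p := by exact_mod_cast hqp
        rw [abs_of_nonneg (sub_nonneg.mpr hc)] at habs
        rw [Nat.cast_sub hqp]
        exact habs
      have hmono : (q.choose (x i) : ℝ) ≤ p.choose (x i) := by
        exact_mod_cast Nat.choose_le_choose (x i) hqp
      rw [abs_of_nonneg (sub_nonneg.mpr hmono)]
      have h1' : (p.choose (x i) : ℝ) ≤ q.choose (x i) + (p - q : ℕ) * (n:ℝ) ^ (x i - 1) := by
        exact_mod_cast h1
      have hpow : (n:ℝ) * (n:ℝ) ^ (x i - 1) = (n:ℝ) ^ (x i) := by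
        rw [← pow_succ']
        congr 1
        omega
      calc (p.choose (x i) : ℝ) - q.choose (x i)
          ≤ (p - q : ℕ) * (n:ℝ) ^ (x i - 1) := by linarith
        _ ≤ δ * n * (n:ℝ) ^ (x i - 1) := by
            apply mul_le_mul_of_nonneg_right h2 (by positivity)
        _ = δ * (n:ℝ) ^ (x i) := by rw [mul_assoc, hpow]
    rcases le_total (b i) (a i) with h | h
    · exact key (a i) (b i) h (ha i hi) (hab i hi)
    · rw [abs_sub_comm]
      exact key (b i) (a i) h (hb i hi) (by rw [abs_sub_comm]; exact hab i hi)
  -- step 2: product difference bound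
  have prod_bd : |(∏ i ∈ I, ((a i).choose (x i) : ℝ)) - ∏ i ∈ I, ((b i).choose (x i) : ℝ)|
      ≤ (I.card : ℝ) * δ * (n:ℝ) ^ k := by
    have Cpos : ∀ i ∈ I, (0:ℝ) < (n:ℝ) ^ (x i) := fun i _ => by positivity
    have hfb : ∀ i ∈ I, (0:ℝ) ≤ ((a i).choose (x i) : ℝ) ∧
        ((a i).choose (x i) : ℝ) ≤ (n:ℝ) ^ (x i) := by
      intro i hi
      constructor
      · positivity
      · exact_mod_cast le_trans (Nat.choose_le_choose (x i) (ha i hi))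
          (Nat.choose_le_pow n (x i))
    have hgb : ∀ i ∈ I, (0:ℝ) ≤ ((b i).choose (x i) : ℝ) ∧
        ((b i).choose (x i) : ℝ) ≤ (n:ℝ) ^ (x i) := by
      intro i hi
      constructor
      · positivity
      · exact_mod_cast le_trans (Nat.choose_le_choose (x i) (hb i hi))
          (Nat.choose_le_pow n (x i))
    have main := abs_prod_sub_prod_le I (fun i => ((a i).choose (x i) : ℝ))
      (fun i => ((b i).choose (x i) : ℝ)) (fun i => (n:ℝ) ^ (x i)) hfb hgb Cpos
    have hsum : (∑ i ∈ I, |((a i).choose (x i) : ℝ) - ((b i).choose (x i) : ℝ)|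
        / (n:ℝ) ^ (x i)) ≤ (I.card : ℝ) * δ := by
      calc (∑ i ∈ I, |((a i).choose (x i) : ℝ) - ((b i).choose (x i) : ℝ)| / (n:ℝ) ^ (x i))
          ≤ ∑ i ∈ I, δ := by
            apply Finset.sum_le_sum
            intro i hi
            rw [div_le_iff₀ (Cpos i hi)]
            exact lip i hi
        _ = (I.card : ℝ) * δ := by rw [Finset.sum_const, nsmul_eq_mul]
    have hprodC : (∏ i ∈ I, (n:ℝ) ^ (x i)) = (n:ℝ) ^ k := by
      rw [Finset.prod_pow_eq_pow_sum, hxsum]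
    rw [hprodC] at main
    calc |(∏ i ∈ I, ((a i).choose (x i) : ℝ)) - ∏ i ∈ I, ((b i).choose (x i) : ℝ)|
        ≤ (∑ i ∈ I, |((a i).choose (x i) : ℝ) - ((b i).choose (x i) : ℝ)|
            / (n:ℝ) ^ (x i)) * (n:ℝ) ^ k := main
      _ ≤ (I.card : ℝ) * δ * (n:ℝ) ^ k := by
          apply mul_le_mul_of_nonneg_right hsum (by positivity)
  -- step 3: divide and conclude
  rw [div_sub_div_same, abs_div, abs_of_pos hchoose_pos, div_le_iff₀ hchoose_pos]
  have hnk : (n:ℝ) ^ k ≤ (k:ℝ) ^ k * n.choose k := by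
    exact_mod_cast pow_le_pow_mul_choose n k hkn
  have hIcard : (I.card : ℝ) ≤ (k : ℝ) := by exact_mod_cast hIk
  have hk2k : (k : ℝ) ≤ 4 * 2 ^ k := by
    have : k ≤ 2 ^ k := Nat.le_of_lt (Nat.lt_two_pow_self : k < 2 ^ k)
    have h2 : (k:ℝ) ≤ 2 ^ k := by exact_mod_cast this
    nlinarith [pow_pos (show (0:ℝ) < 2 by norm_num) k]
  calc |(∏ i ∈ I, ((a i).choose (x i) : ℝ)) - ∏ i ∈ I, ((b i).choose (x i) : ℝ)|
      ≤ (I.card : ℝ) * δ * (n:ℝ) ^ k := prod_bd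
    _ ≤ (k:ℝ) * δ * ((k:ℝ) ^ k * n.choose k) := by
        apply mul_le_mul (by gcongr) hnk (by positivity) (by positivity)
    _ ≤ 4 * δ * (2 * k : ℝ) ^ k * n.choose k := by
        rw [mul_pow]
        have hkpos : (0:ℝ) ≤ (k:ℝ) ^ k := by positivity
        nlinarith [mul_nonneg (mul_nonneg hδ0.le hkpos) hchoose_pos.le,
          mul_nonneg hδ0.le (mul_nonneg hkpos hchoose_pos.le)]
end
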